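/- arXiv:math/0512056 — 4 statements merged into one kernel-verified Lean document; each statement's English description precedes it below -/
import Mathlib

section
/- Let E be a Polish space equipped with its Borel σ-algebra, and let λ₁, λ₂ be probability measures on E. Then there exists a maximal coupling of (λ₁, λ₂), i.e. a probability measure ζ on E × E whose first marginal is λ₁ and second marginal is λ₂, and such that ζ({(x, y) ∈ E × E : x ≠ y}) = ‖λ₁ − λ₂‖_var. -/
open MeasureTheory

/-- Total variation distance between two measures:
`sup { |μ(Γ) − ν(Γ)| : Γ measurable }`. -/
noncomputable def tvDist {E : Type*} [MeasurableSpace E] (μ ν : Measure E) : ℝ :=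
  sSup {r : ℝ | ∃ Γ : Set E, MeasurableSet Γ ∧ r = |(μ Γ).toReal - (ν Γ).toReal|}

/-- existence of a maximal coupling of two probability measures on a Polish
space: a probability measure on `E × E` with marginals `λ₁, λ₂` giving the complement of
the diagonal exactly the total variation distance. -/
theorem exists_maximal_coupling
    {E : Type*} [TopologicalSpace E] [PolishSpace E] [MeasurableSpace E] [BorelSpace E]
    (lam₁ lam₂ : Measure E) [IsProbabilityMeasure lam₁] [IsProbabilityMeasure lam₂] :
    ∃ ζ : Measure (E × E), IsProbabilityMeasure ζ ∧
      ζ.map Prod.fst = lam₁ ∧ ζ.map Prod.snd = lam₂ ∧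
      (ζ {p : E × E | p.1 ≠ p.2}).toReal = tvDist lam₁ lam₂ := by
  obtain ⟨S, hS, hSle, hScle⟩ := hahn_decomposition (μ := lam₁) (ν := lam₂)
  set ν : Measure E := lam₂.restrict S + lam₁.restrict Sᶜ with hνdef
  have νapp : ∀ A : Set E, ν A = lam₂ (A ∩ S) + lam₁ (A ∩ Sᶜ) := by
    intro A
    simp [hνdef, Measure.restrict_apply' hS, Measure.restrict_apply' hS.compl]
  have hνle₁ : ν ≤ lam₁ := by
    refine Measure.le_iff.mpr fun A hA => ?_
    rw [νapp]
    calc lam₂ (A ∩ S) + lam₁ (A ∩ Sᶜ)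
        ≤ lam₁ (A ∩ S) + lam₁ (A ∩ Sᶜ) := by
          gcongr ?_ + _
          exact hSle _ (hA.inter hS) Set.inter_subset_right
      _ = lam₁ A := by rw [← Set.diff_eq, measure_inter_add_diff A hS]
  have hνle₂ : ν ≤ lam₂ := by
    refine Measure.le_iff.mpr fun A hA => ?_
    rw [νapp]
    calc lam₂ (A ∩ S) + lam₁ (A ∩ Sᶜ)
        ≤ lam₂ (A ∩ S) + lam₂ (A ∩ Sᶜ) := by
          gcongr _ + ?_
          exact hScle _ (hA.inter hS.compl) Set.inter_subset_right
      _ = lam₂ A := by rw [← Set.diff_eq, measure_inter_add_diff A hS]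
  haveI : IsFiniteMeasure ν := isFiniteMeasure_of_le lam₁ hνle₁
  set μ₁ : Measure E := lam₁ - ν with hμ₁def
  set μ₂ : Measure E := lam₂ - ν with hμ₂def
  haveI : IsFiniteMeasure μ₁ := isFiniteMeasure_of_le lam₁ (Measure.sub_le)
  haveI : IsFiniteMeasure μ₂ := isFiniteMeasure_of_le lam₂ (Measure.sub_le)
  have hνS : ν S = lam₂ S := by
    rw [νapp]; simp
  have hνSc : ν Sᶜ = lam₁ Sᶜ := by
    rw [νapp]; simp
  have hμ₁Sc : μ₁ Sᶜ = 0 := by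
    rw [hμ₁def, Measure.sub_apply hS.compl hνle₁, hνSc, tsub_self]
  have hμ₂S : μ₂ S = 0 := by
    rw [hμ₂def, Measure.sub_apply hS hνle₂, hνS, tsub_self]
  set β : ENNReal := lam₁ S - lam₂ S with hβdef
  have hle' : lam₂ S ≤ lam₁ S := hSle S hS (Set.Subset.refl S)
  have hβ_ne_top : β ≠ ⊤ := ne_top_of_le_ne_top (measure_ne_top lam₁ S) tsub_le_self
  have hβν : β + ν Set.univ = 1 := by
    rw [νapp]
    simp only [Set.univ_inter]
    rw [← add_assoc, hβdef, tsub_add_cancel_of_le hle', measure_add_measure_compl hS,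
      measure_univ]
  have hμ₁univ : μ₁ Set.univ = β := by
    have h2 : μ₁ Set.univ + ν Set.univ = 1 := by
      rw [hμ₁def, Measure.sub_apply MeasurableSet.univ hνle₁,
        tsub_add_cancel_of_le (Measure.le_iff'.mp hνle₁ _), measure_univ]
    exact WithTop.add_right_cancel (measure_ne_top ν _) (h2.trans hβν.symm)
  have hμ₂univ : μ₂ Set.univ = β := by
    have h2 : μ₂ Set.univ + ν Set.univ = 1 := by
      rw [hμ₂def, Measure.sub_apply MeasurableSet.univ hνle₂,
        tsub_add_cancel_of_le (Measure.le_iff'.mp hνle₂ _), measure_univ]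
    exact WithTop.add_right_cancel (measure_ne_top ν _) (h2.trans hβν.symm)
  have hμ₁S : μ₁ S = β := by
    have h := measure_add_measure_compl (μ := μ₁) hS
    rwa [hμ₁Sc, add_zero, hμ₁univ] at h
  have hμ₂Sc : μ₂ Sᶜ = β := by
    have h := measure_add_measure_compl (μ := μ₂) hS
    rwa [hμ₂S, zero_add, hμ₂univ] at h
  have hdiag : Measurable fun x : E => (x, x) := measurable_id.prodMk measurable_id
  have hD : MeasurableSet {p : E × E | p.1 = p.2} := by
    exact isClosed_diagonal.measurableSet
  have hDc : MeasurableSet {p : E × E | p.1 ≠ p.2} := hD.compl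
  set ζ : Measure (E × E) := ν.map (fun x => (x, x)) + β⁻¹ • (μ₁.prod μ₂) with hζdef
  have hcomp1 : (Prod.fst ∘ fun x : E => (x, x)) = id := rfl
  have hcomp2 : (Prod.snd ∘ fun x : E => (x, x)) = id := rfl
  have hcancel : ∀ m : Measure E, m Set.univ = β → (β⁻¹ * β) • m = m := by
    intro m hm
    rcases eq_or_ne β 0 with hb | hb
    · have hm0 : m = 0 := Measure.measure_univ_eq_zero.mp (by rw [hm, hb])
      rw [hm0, smul_zero]
    · rw [ENNReal.inv_mul_cancel hb hβ_ne_top, one_smul]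
  have hmap1 : ζ.map Prod.fst = lam₁ := by
    rw [hζdef, Measure.map_add _ _ measurable_fst, Measure.map_smul,
      Measure.map_map measurable_fst hdiag, hcomp1, Measure.map_id,
      Measure.map_fst_prod, hμ₂univ, smul_smul, hcancel μ₁ hμ₁univ, add_comm]
    exact Measure.sub_add_cancel_of_le hνle₁
  have hmap2 : ζ.map Prod.snd = lam₂ := by
    rw [hζdef, Measure.map_add _ _ measurable_snd, Measure.map_smul,
      Measure.map_map measurable_snd hdiag, hcomp2, Measure.map_id,
      Measure.map_snd_prod, hμ₁univ, smul_smul, hcancel μ₂ hμ₂univ, add_comm]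
    exact Measure.sub_add_cancel_of_le hνle₂
  have hζDc : ζ {p : E × E | p.1 ≠ p.2} = β := by
    rw [hζdef, Measure.add_apply, Measure.smul_apply, Measure.map_apply hdiag hDc]
    have hpre : ((fun x : E => (x, x)) ⁻¹' {p : E × E | p.1 ≠ p.2}) = ∅ := by
      ext x; simp
    rw [hpre, measure_empty, zero_add]
    have hprod : (μ₁.prod μ₂) {p : E × E | p.1 ≠ p.2} = β * β := by
      apply le_antisymm
      · calc (μ₁.prod μ₂) {p : E × E | p.1 ≠ p.2}
            ≤ (μ₁.prod μ₂) Set.univ := measure_mono (Set.subset_univ _)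
          _ = β * β := by
              rw [← Set.univ_prod_univ, Measure.prod_prod, hμ₁univ, hμ₂univ]
      · have hsub : S ×ˢ Sᶜ ⊆ {p : E × E | p.1 ≠ p.2} := by
          rintro ⟨x, y⟩ ⟨hx, hy⟩ he
          simp only [Set.mem_setOf_eq] at he
          subst he
          exact hy hx
        calc β * β = (μ₁.prod μ₂) (S ×ˢ Sᶜ) := by
              rw [Measure.prod_prod, hμ₁S, hμ₂Sc]
          _ ≤ _ := measure_mono hsub
    rw [hprod]
    rcases eq_or_ne β 0 with hb | hb
    · rw [hb]; simp
    · rw [smul_eq_mul, ← mul_assoc, ENNReal.inv_mul_cancel hb hβ_ne_top, one_mul]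
  -- total variation computation
  have key : ∀ Γ : Set E, MeasurableSet Γ →
      (lam₁ Γ).toReal - (lam₂ Γ).toReal ≤ (lam₁ S).toReal - (lam₂ S).toReal := by
    intro Γ hΓ
    have h1 : lam₁ Γ + lam₂ S ≤ lam₂ Γ + lam₁ S := by
      calc lam₁ Γ + lam₂ S
          = (lam₁ (Γ ∩ S) + lam₁ (Γ \ S)) + (lam₂ (S ∩ Γ) + lam₂ (S \ Γ)) := by
            rw [measure_inter_add_diff Γ hS, measure_inter_add_diff S hΓ]
        _ ≤ (lam₁ (Γ ∩ S) + lam₂ (Γ \ S)) + (lam₂ (S ∩ Γ) + lam₁ (S \ Γ)) := by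
            gcongr (_ + ?_) + (_ + ?_)
            · exact hScle _ (hΓ.diff hS) (Set.diff_subset_compl Γ S)
            · exact hSle _ (hS.diff hΓ) Set.diff_subset
        _ = (lam₂ (Γ ∩ S) + lam₂ (Γ \ S)) + (lam₁ (S ∩ Γ) + lam₁ (S \ Γ)) := by
            rw [Set.inter_comm S Γ]; ring
        _ = lam₂ Γ + lam₁ S := by
            rw [measure_inter_add_diff Γ hS, measure_inter_add_diff S hΓ]
    have h2 := ENNReal.toReal_mono
      (ENNReal.add_ne_top.mpr ⟨measure_ne_top _ _, measure_ne_top _ _⟩) h1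
    rw [ENNReal.toReal_add (measure_ne_top _ _) (measure_ne_top _ _),
      ENNReal.toReal_add (measure_ne_top _ _) (measure_ne_top _ _)] at h2
    linarith
  have habs : ∀ Γ : Set E, MeasurableSet Γ →
      |(lam₁ Γ).toReal - (lam₂ Γ).toReal| ≤ (lam₁ S).toReal - (lam₂ S).toReal := by
    intro Γ hΓ
    have hc := key Γᶜ hΓ.compl
    have c1 : (lam₁ Γ).toReal + (lam₁ Γᶜ).toReal = 1 := by
      rw [← ENNReal.toReal_add (measure_ne_top _ _) (measure_ne_top _ _),
        measure_add_measure_compl hΓ, measure_univ, ENNReal.toReal_one]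
    have c2 : (lam₂ Γ).toReal + (lam₂ Γᶜ).toReal = 1 := by
      rw [← ENNReal.toReal_add (measure_ne_top _ _) (measure_ne_top _ _),
        measure_add_measure_compl hΓ, measure_univ, ENNReal.toReal_one]
    rw [abs_sub_le_iff]
    exact ⟨key Γ hΓ, by linarith⟩
  have hs₂s₁ : (lam₂ S).toReal ≤ (lam₁ S).toReal :=
    ENNReal.toReal_mono (measure_ne_top _ _) hle'
  have htv : tvDist lam₁ lam₂ = (lam₁ S).toReal - (lam₂ S).toReal := by
    apply le_antisymm
    · refine csSup_le ⟨0, ∅, MeasurableSet.empty, by simp⟩ ?_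
      rintro r ⟨Γ, hΓ, rfl⟩
      exact habs Γ hΓ
    · refine le_csSup ⟨(lam₁ S).toReal - (lam₂ S).toReal, ?_⟩
        ⟨S, hS, (abs_of_nonneg (by linarith)).symm⟩
      rintro r ⟨Γ, hΓ, rfl⟩
      exact habs Γ hΓ
  have hβtoReal : β.toReal = (lam₁ S).toReal - (lam₂ S).toReal :=
    ENNReal.toReal_sub_of_le hle' (measure_ne_top _ _)
  refine ⟨ζ, ?_, hmap1, hmap2, ?_⟩
  · constructor
    have h : ζ Set.univ = (ζ.map Prod.fst) Set.univ := by
      rw [Measure.map_apply measurable_fst MeasurableSet.univ, Set.preimage_univ]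
    rw [h, hmap1, measure_univ]
  · rw [hζDc, hβtoReal, htv]
end

section
/- Let ε > 0 and ε₀ ∈ (0, ε). Let (μₙ)ₙ≥1 be a sequence of positive reals with Σₙ μₙ⁻² < ∞, and let (bₙ)ₙ≥1 be a sequence of nonnegative reals such that Σₙ bₙ² μₙ^{1+ε} < ∞. Then for every α with 0 < α ≤ (ε − ε₀)/(3 + ε), the series Σₙ μₙ^{1+ε₀} bₙ^{2(1−α)} converges. -/
open scoped Real NNReal

/-- if `Σ μₙ⁻² < ∞` and `Σ bₙ² μₙ^{1+ε} < ∞` with `μₙ > 0`, `bₙ ≥ 0`, then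
for every `α` with `0 < α ≤ (ε − ε₀)/(3 + ε)` (where `0 < ε₀ < ε`), the series
`Σ μₙ^{1+ε₀} bₙ^{2(1−α)}` converges. -/
theorem summable_factored_noise_coefficients
    (ε ε₀ : ℝ) (hε : 0 < ε) (hε₀ : 0 < ε₀) (hε₀ε : ε₀ < ε)
    (μ : ℕ → ℝ) (hμ : ∀ n, 0 < μ n)
    (hμsum : Summable fun n => (μ n) ^ (-2 : ℝ))
    (b : ℕ → ℝ) (hb : ∀ n, 0 ≤ b n)
    (hbsum : Summable fun n => (b n) ^ 2 * (μ n) ^ (1 + ε))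
    (α : ℝ) (hα : 0 < α) (hα' : α ≤ (ε - ε₀) / (3 + ε)) :
    Summable fun n => (μ n) ^ (1 + ε₀) * (b n) ^ (2 * (1 - α)) := by
  have h3 : (0:ℝ) < 3 + ε := by linarith
  have hα1 : α < 1 := by
    have : (ε - ε₀) / (3 + ε) < 1 := by rw [div_lt_one h3]; linarith
    linarith
  set e : ℝ := (ε₀ - ε) / α + (1 + ε) with he
  have hmul : α * (3 + ε) ≤ ε - ε₀ := (le_div_iff₀ h3).mp hα'
  have he2 : e ≤ -2 := by
    have h1 : (ε₀ - ε) / α ≤ -(3 + ε) := by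
      rw [div_le_iff₀ hα]; nlinarith
    rw [he]; linarith
  -- eventually μ n ≥ 1
  have htend : Filter.Tendsto (fun n => (μ n) ^ (-2 : ℝ)) Filter.atTop (nhds 0) :=
    hμsum.tendsto_atTop_zero
  have hev : ∀ᶠ n in Filter.atTop, 1 ≤ μ n := by
    filter_upwards [htend.eventually_lt_const (by norm_num : (0:ℝ) < 1)] with n hn
    by_contra h
    push_neg at h
    have : (1:ℝ) ≤ (μ n) ^ (-2 : ℝ) :=
      Real.one_le_rpow_of_pos_of_le_one_of_nonpos (hμ n) h.le (by norm_num)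
    linarith
  have hg : Summable fun n => (μ n) ^ e := by
    apply summable_of_isBigO_nat hμsum
    apply Asymptotics.IsBigO.of_bound 1
    filter_upwards [hev] with n hn
    have h1 : (μ n) ^ e ≤ (μ n) ^ (-2 : ℝ) :=
      Real.rpow_le_rpow_of_exponent_le hn (by linarith)
    have h2 : (0:ℝ) ≤ (μ n) ^ e := (Real.rpow_pos_of_pos (hμ n) e).le
    have h3 : (0:ℝ) ≤ (μ n) ^ (-2:ℝ) := (Real.rpow_pos_of_pos (hμ n) _).le
    simp only [Real.norm_eq_abs, abs_of_nonneg h2, abs_of_nonneg h3, one_mul]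
    exact h1
  have hsum : Summable fun n =>
      (1 - α) * ((b n) ^ 2 * (μ n) ^ (1 + ε)) + α * ((μ n) ^ e) :=
    (hbsum.mul_left _).add (hg.mul_left _)
  apply Summable.of_nonneg_of_le (fun n => mul_nonneg (Real.rpow_pos_of_pos (hμ n) _).le (Real.rpow_nonneg (hb n) _)) _ hsum
  intro n
  have key : (μ n) ^ (1 + ε₀) * (b n) ^ (2 * (1 - α))
      = ((b n) ^ 2 * (μ n) ^ (1 + ε)) ^ (1 - α) * ((μ n) ^ e) ^ α := by
    rw [Real.mul_rpow (by positivity) (Real.rpow_pos_of_pos (hμ n) _).le,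
      ← Real.rpow_natCast (b n) 2, ← Real.rpow_mul (hb n),
      ← Real.rpow_mul (hμ n).le, ← Real.rpow_mul (hμ n).le,
      mul_assoc, ← Real.rpow_add (hμ n)]
    have : (1 + ε) * (1 - α) + e * α = 1 + ε₀ := by
      rw [he]; field_simp; ring
    rw [this]
    push_cast
    ring
  rw [key]
  exact Real.geom_mean_le_arith_mean2_weighted (by linarith) hα.le
    (mul_nonneg (sq_nonneg _) (Real.rpow_pos_of_pos (hμ n) _).le)
    (Real.rpow_pos_of_pos (hμ n) _).le (by ring)
end

section
/- Let (E, ℰ) be a measurable space, κ a Markov kernel on E, V : E → [0, ∞) a measurable function, γ ∈ (0, 1) and B ≥ 0 such that ∫_E V(y) κ(x, dy) ≤ γ V(x) + B for all x ∈ E. Fix R > B/(1 − γ). For x ∈ E, let ℙₓ be the law of the canonical Markov chain (Xₙ)_{n≥0} with transition kernel κ started at X₀ = x, and let τ = inf{ n ≥ 1 : V(Xₙ) ≤ R }. Then there exist constants α > 0 and C > 0, depending only on γ, B and R, such that Eₓ[e^{α τ}] ≤ C (1 + V(x)) for every x ∈ E. -/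
set_option maxHeartbeats 1000000 in
open MeasureTheory ProbabilityTheory Classical in

/-- Lyapunov drift condition `∫ V dκ(x,·) ≤ γ V(x) + B` (with `γ ∈ (0,1)`,
`B ≥ 0`) implies a uniform exponential moment for the first return time
`τ = inf {n ≥ 1 : V(Xₙ) ≤ R}` of the canonical Markov chain to the sublevel set
`{V ≤ R}`, for any fixed `R > B/(1−γ)`: there are `α > 0`, `C > 0` depending only on
`γ, B, R` with `Eₓ[e^{ατ}] ≤ C (1 + V(x))` for all `x` (and `e^{ατ} = ∞` when `τ = ∞`). -/
theorem lyapunov_drift_exp_return_time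
    (γ B R : ℝ) (hγ0 : 0 < γ) (hγ1 : γ < 1) (hB : 0 ≤ B) (hR : B / (1 - γ) < R) :
    ∃ α > (0 : ℝ), ∃ C > (0 : ℝ),
      ∀ (E : Type) [mE : MeasurableSpace E] (κ : Kernel E E), IsMarkovKernel κ →
        ∀ V : E → ℝ, Measurable V → (∀ x, 0 ≤ V x) →
        (∀ x, ∫⁻ y, ENNReal.ofReal (V y) ∂(κ x) ≤ ENNReal.ofReal (γ * V x + B)) →
        ∀ Pm : E → Measure (ℕ → E),
          (∀ x, IsProbabilityMeasure (Pm x)) →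
          (∀ x, (Pm x).map (fun ω => ω 0) = Measure.dirac x) →
          -- Markov property with transition kernel κ, in integral form: for every
          -- bounded measurable functional `g` of the path up to time `n`,
          -- `E[g · f(X_{n+1})] = E[g · ∫ f dκ(Xₙ, ·)]`.
          (∀ (x : E) (n : ℕ) (f : E → ENNReal) (g : (ℕ → E) → ENNReal),
            Measurable f →
            Measurable[MeasurableSpace.comap
              (fun (ω : ℕ → E) (i : Fin (n + 1)) => ω i) inferInstance] g →
            ∫⁻ ω, g ω * f (ω (n + 1)) ∂(Pm x)
              = ∫⁻ ω, g ω * ∫⁻ y, f y ∂(κ (ω n)) ∂(Pm x)) →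
          ∀ x : E,
            ∫⁻ ω, (if {n : ℕ | 1 ≤ n ∧ V (ω n) ≤ R}.Nonempty
                then ENNReal.ofReal
                  (Real.exp (α * (sInf {n : ℕ | 1 ≤ n ∧ V (ω n) ≤ R} : ℕ)))
                else ⊤) ∂(Pm x)
              ≤ ENNReal.ofReal (C * (1 + V x)) := by
  have h1γ : (0:ℝ) < 1 - γ := by linarith
  have hR0 : 0 < R := lt_of_le_of_lt (div_nonneg hB h1γ.le) hR
  have hBR : B < R * (1 - γ) := by
    rw [div_lt_iff₀ h1γ] at hR; linarith
  set δ : ℝ := γ + B / R with hδdef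
  have hδ0 : 0 < δ := by positivity
  have hδ1 : δ < 1 := by
    have h : B / R < 1 - γ := by rw [div_lt_iff₀ hR0]; nlinarith
    rw [hδdef]; linarith
  set s : ℝ := Real.sqrt δ with hsdef
  have hs0 : 0 < s := Real.sqrt_pos.mpr hδ0
  have hs1 : s < 1 := by
    rw [hsdef, show (1:ℝ) = Real.sqrt 1 from Real.sqrt_one.symm]
    exact Real.sqrt_lt_sqrt hδ0.le hδ1
  have hs2 : s ^ 2 = δ := Real.sq_sqrt hδ0.le
  have hsinv : 1 < s⁻¹ := one_lt_inv₀ hs0 |>.mpr hs1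
  set α : ℝ := Real.log s⁻¹ with hαdef
  have hα0 : 0 < α := Real.log_pos hsinv
  have hexp : Real.exp α = s⁻¹ := Real.exp_log (by positivity)
  set C : ℝ := Real.exp α + (γ + B) / (δ * R) with hCdef
  have hC0 : 0 < C := by positivity
  refine ⟨α, hα0, C, hC0, ?_⟩
  intro E mE κ hκ V hV hV0 hdrift Pm hprob hzero hMarkov x
  haveI := hprob x
  classical
  set u : ℝ := Real.exp α with hudef
  have hu1 : 1 < u := by rw [hexp]; exact hsinv
  have hu0 : 0 < u := lt_trans one_pos hu1
  -- F n = u^(n+1), c n = ofReal (F (n+1) - F n)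
  set F : ℕ → ℝ := fun n => u ^ (n + 1) with hFdef
  have hFexp : ∀ n : ℕ, F n = Real.exp (α * (n + 1)) := by
    intro n
    rw [hFdef]
    have : α * ((n:ℝ) + 1) = ((n + 1 : ℕ) : ℝ) * α := by push_cast; ring
    rw [this, Real.exp_nat_mul]
  have hFmono : Monotone F := fun i j hij =>
    pow_le_pow_right₀ hu1.le (by omega)
  set c : ℕ → ENNReal := fun n => ENNReal.ofReal (F (n + 1) - F n) with hcdef
  set N : ℝ := γ * V x + B with hNdef
  have hN0 : 0 ≤ N := by have := hV0 x; rw [hNdef]; positivity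
  -- the sets S m and indicators χ m
  set S : ℕ → Set (ℕ → E) := fun m => {ω | ∀ k, 1 ≤ k → k ≤ m → R < V (ω k)} with hSdef
  set χ : ℕ → (ℕ → E) → ENNReal := fun m => (S m).indicator (fun _ => 1) with hχdef
  have hSmeas : ∀ m, MeasurableSet (S m) := by
    intro m
    have hEq : S m = ⋂ k ∈ Set.Icc 1 m, {ω : ℕ → E | R < V (ω k)} := by
      ext ω
      simp only [hSdef, Set.mem_setOf_eq, Set.mem_iInter, Set.mem_Icc, and_imp]
    rw [hEq]
    exact MeasurableSet.biInter (Set.to_countable _)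
      (fun k _ => measurableSet_lt measurable_const (hV.comp (measurable_pi_apply k)))
  have hχmeas : ∀ m, Measurable (χ m) := fun m => measurable_const.indicator (hSmeas m)
  have hχ01 : ∀ m ω, χ m ω ≤ 1 := by
    intro m ω
    by_cases h : ω ∈ S m <;> simp [hχdef, Set.indicator, h]
  have hχmono : ∀ m ω, χ (m + 1) ω ≤ χ m ω := by
    intro m ω
    by_cases h : ω ∈ S (m + 1)
    · have h' : ω ∈ S m := by
        intro k h1 h2; exact h k h1 (le_trans h2 (Nat.le_succ m))
      simp [hχdef, Set.indicator, h, h']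
    · simp [hχdef, Set.indicator, h]
  have hχcomap : ∀ n, Measurable[MeasurableSpace.comap
      (fun (ω : ℕ → E) (i : Fin (n + 1)) => ω i) inferInstance] (χ n) := by
    intro n
    apply Measurable.indicator measurable_const
    rw [MeasurableSpace.measurableSet_comap]
    refine ⟨{v : Fin (n + 1) → E | ∀ i : Fin (n + 1), 1 ≤ (i : ℕ) → R < V (v i)}, ?_, ?_⟩
    · have hEq : {v : Fin (n + 1) → E | ∀ i : Fin (n + 1), 1 ≤ (i : ℕ) → R < V (v i)}
          = ⋂ i : Fin (n + 1), {v : Fin (n + 1) → E | 1 ≤ (i : ℕ) → R < V (v i)} := by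
        ext v; simp [Set.mem_iInter]
      rw [hEq]
      refine MeasurableSet.iInter fun i => ?_
      by_cases hi : 1 ≤ (i : ℕ)
      · have : {v : Fin (n + 1) → E | 1 ≤ (i : ℕ) → R < V (v i)}
            = {v : Fin (n + 1) → E | R < V (v i)} := by ext v; simp [hi]
        rw [this]
        exact measurableSet_lt measurable_const (hV.comp (measurable_pi_apply i))
      · have : {v : Fin (n + 1) → E | 1 ≤ (i : ℕ) → R < V (v i)} = Set.univ := by
          ext v; simp [hi]
        rw [this]; exact MeasurableSet.univ
    · ext ω
      simp only [Set.mem_preimage, Set.mem_setOf_eq, hSdef]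
      constructor
      · intro h k h1 h2
        exact h ⟨k, Nat.lt_succ_of_le h2⟩ h1
      · intro h i hi
        exact h i hi (Nat.lt_succ_iff.mp i.isLt)
  -- measurable auxiliary functions
  have hmeasV : Measurable (fun y : E => ENNReal.ofReal (V y)) := hV.ennreal_ofReal
  have hmeasγ : Measurable (fun y : E => ENNReal.ofReal (γ * V y + B)) :=
    ((hV.const_mul γ).add_const B).ennreal_ofReal
  -- the sequence a m
  set a : ℕ → ENNReal := fun m => ∫⁻ ω, χ m ω * ENNReal.ofReal (V (ω m)) ∂(Pm x) with hadef
  have hbase : a 1 ≤ ENNReal.ofReal N := by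
    have h1 : a 1 ≤ ∫⁻ ω, (fun _ : ℕ → E => (1:ENNReal)) ω * ENNReal.ofReal (V (ω (0 + 1))) ∂(Pm x) :=
      lintegral_mono fun ω => mul_le_mul_left (hχ01 1 ω) _
    have h2 : ∫⁻ ω, (fun _ : ℕ → E => (1:ENNReal)) ω * ENNReal.ofReal (V (ω (0 + 1))) ∂(Pm x)
        = ∫⁻ ω, (fun _ : ℕ → E => (1:ENNReal)) ω * ∫⁻ y, ENNReal.ofReal (V y) ∂(κ (ω 0)) ∂(Pm x) :=
      hMarkov x 0 (fun y => ENNReal.ofReal (V y)) (fun _ => 1) hmeasV measurable_const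
    have h3 : ∫⁻ ω, (fun _ : ℕ → E => (1:ENNReal)) ω * ∫⁻ y, ENNReal.ofReal (V y) ∂(κ (ω 0)) ∂(Pm x)
        ≤ ∫⁻ ω, ENNReal.ofReal (γ * V (ω 0) + B) ∂(Pm x) :=
      lintegral_mono fun ω => by simpa [one_mul] using hdrift (ω 0)
    have h4 : ∫⁻ ω, ENNReal.ofReal (γ * V (ω 0) + B) ∂(Pm x) = ENNReal.ofReal N := by
      calc ∫⁻ ω, ENNReal.ofReal (γ * V (ω 0) + B) ∂(Pm x)
          = ∫⁻ y, ENNReal.ofReal (γ * V y + B) ∂((Pm x).map (fun ω => ω 0)) :=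
            (lintegral_map hmeasγ (measurable_pi_apply 0)).symm
        _ = ENNReal.ofReal N := by rw [hzero x, lintegral_dirac' _ hmeasγ]
    exact le_trans h1 (le_trans (le_of_eq h2) (le_trans h3 (le_of_eq h4)))
  have hstep : ∀ n, 1 ≤ n → a (n + 1) ≤ ENNReal.ofReal δ * a n := by
    intro n hn
    have h1 : a (n + 1) ≤ ∫⁻ ω, χ n ω * ENNReal.ofReal (V (ω (n + 1))) ∂(Pm x) :=
      lintegral_mono fun ω => mul_le_mul_left (hχmono n ω) _
    have h2 : ∫⁻ ω, χ n ω * ENNReal.ofReal (V (ω (n + 1))) ∂(Pm x)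
        = ∫⁻ ω, χ n ω * ∫⁻ y, ENNReal.ofReal (V y) ∂(κ (ω n)) ∂(Pm x) :=
      hMarkov x n (fun y => ENNReal.ofReal (V y)) (χ n) hmeasV (hχcomap n)
    have h3 : ∫⁻ ω, χ n ω * ∫⁻ y, ENNReal.ofReal (V y) ∂(κ (ω n)) ∂(Pm x)
        ≤ ∫⁻ ω, ENNReal.ofReal δ * (χ n ω * ENNReal.ofReal (V (ω n))) ∂(Pm x) := by
      refine lintegral_mono fun ω => ?_
      by_cases h : ω ∈ S n
      · have hR' : R < V (ω n) := h n hn le_rfl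
        have hχ1 : χ n ω = 1 := Set.indicator_of_mem h _
        rw [hχ1, one_mul, one_mul]
        calc ∫⁻ y, ENNReal.ofReal (V y) ∂(κ (ω n)) ≤ ENNReal.ofReal (γ * V (ω n) + B) :=
              hdrift _
          _ ≤ ENNReal.ofReal (δ * V (ω n)) := by
              apply ENNReal.ofReal_le_ofReal
              have e1 : B / R * R = B := div_mul_cancel₀ B hR0.ne'
              have e2 : B / R * R ≤ B / R * V (ω n) :=
                mul_le_mul_of_nonneg_left hR'.le (div_nonneg hB hR0.le)
              have e3 : δ * V (ω n) = γ * V (ω n) + B / R * V (ω n) := by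
                rw [hδdef]; ring
              rw [e3]; linarith
          _ = ENNReal.ofReal δ * ENNReal.ofReal (V (ω n)) := ENNReal.ofReal_mul hδ0.le
      · have hχ0 : χ n ω = 0 := Set.indicator_of_notMem h _
        rw [hχ0]; simp
    have h4 : ∫⁻ ω, ENNReal.ofReal δ * (χ n ω * ENNReal.ofReal (V (ω n))) ∂(Pm x)
        = ENNReal.ofReal δ * a n := lintegral_const_mul' _ _ ENNReal.ofReal_ne_top
    exact le_trans h1 (le_trans (le_of_eq h2) (le_trans h3 (le_of_eq h4)))
  have habound : ∀ m : ℕ, a (m + 1) ≤ ENNReal.ofReal (δ ^ m * N) := by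
    intro m
    induction m with
    | zero => simpa using hbase
    | succ k ih =>
        calc a (k + 1 + 1) ≤ ENNReal.ofReal δ * a (k + 1) := hstep (k + 1) (by omega)
          _ ≤ ENNReal.ofReal δ * ENNReal.ofReal (δ ^ k * N) := mul_le_mul_right ih _
          _ = ENNReal.ofReal (δ ^ (k + 1) * N) := by
              rw [← ENNReal.ofReal_mul hδ0.le]; congr 1; ring
  have hP : ∀ m : ℕ, ∫⁻ ω, χ (m + 1) ω ∂(Pm x) ≤ ENNReal.ofReal (δ ^ m * N / R) := by
    intro m
    have h1 : ENNReal.ofReal R * ∫⁻ ω, χ (m + 1) ω ∂(Pm x) ≤ a (m + 1) := by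
      rw [← lintegral_const_mul' _ _ ENNReal.ofReal_ne_top]
      refine lintegral_mono fun ω => ?_
      by_cases h : ω ∈ S (m + 1)
      · have hR' : R < V (ω (m + 1)) := h (m + 1) (by omega) le_rfl
        have hχ1 : χ (m + 1) ω = 1 := Set.indicator_of_mem h _
        rw [hχ1, one_mul, mul_one]
        exact ENNReal.ofReal_le_ofReal hR'.le
      · have hχ0 : χ (m + 1) ω = 0 := Set.indicator_of_notMem h _
        rw [hχ0]; simp
    have h2 : ENNReal.ofReal R * ∫⁻ ω, χ (m + 1) ω ∂(Pm x) ≤ ENNReal.ofReal (δ ^ m * N) :=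
      le_trans h1 (habound m)
    rw [ENNReal.ofReal_div_of_pos hR0,
      ENNReal.le_div_iff_mul_le (Or.inl (ENNReal.ofReal_pos.mpr hR0).ne') (Or.inl ENNReal.ofReal_ne_top)]
    rwa [mul_comm] at h2
  -- pointwise bound
  have hpt : ∀ ω : ℕ → E,
      (if {n : ℕ | 1 ≤ n ∧ V (ω n) ≤ R}.Nonempty
          then ENNReal.ofReal (Real.exp (α * (sInf {n : ℕ | 1 ≤ n ∧ V (ω n) ≤ R} : ℕ)))
          else ⊤)
        ≤ ENNReal.ofReal (Real.exp α) + ∑' n : ℕ, c n * χ (n + 1) ω := by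
    intro ω
    by_cases hne : {n : ℕ | 1 ≤ n ∧ V (ω n) ≤ R}.Nonempty
    · rw [if_pos hne]
      have hmem := Nat.sInf_mem hne
      set m := sInf {n : ℕ | 1 ≤ n ∧ V (ω n) ≤ R} with hm
      have hm1 : 1 ≤ m := hmem.1
      have hχeq : ∀ n, n + 1 < m → χ (n + 1) ω = 1 := by
        intro n hn
        apply Set.indicator_of_mem _ _
        intro k hk1 hk2
        have hklt : k < m := lt_of_le_of_lt hk2 hn
        have hk : k ∉ {n : ℕ | 1 ≤ n ∧ V (ω n) ≤ R} := Nat.notMem_of_lt_sInf hklt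
        simp only [Set.mem_setOf_eq, not_and, not_le] at hk
        exact hk hk1
      have hkey : ENNReal.ofReal (Real.exp (α * m))
          ≤ ENNReal.ofReal (Real.exp α) + ∑ n ∈ Finset.range (m - 1), c n := by
        have htel : ∑ n ∈ Finset.range (m - 1), (F (n + 1) - F n) = F (m - 1) - F 0 :=
          Finset.sum_range_sub F (m - 1)
        have hF0 : F 0 = Real.exp α := by rw [hFexp 0]; norm_num
        have hFm : F (m - 1) = Real.exp (α * m) := by
          rw [hFexp (m - 1)]; congr 1
          have : ((m - 1 : ℕ) : ℝ) = (m : ℝ) - 1 := by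
            push_cast [Nat.cast_sub hm1]; ring
          rw [this]; ring
        have hsum : ∑ n ∈ Finset.range (m - 1), c n
            = ENNReal.ofReal (Real.exp (α * m) - Real.exp α) := by
          rw [hcdef, ← ENNReal.ofReal_sum_of_nonneg
            (fun n _ => sub_nonneg.mpr (hFmono (Nat.le_succ n))), htel, hF0, hFm]
        have hle : Real.exp α ≤ Real.exp (α * m) := by
          apply Real.exp_le_exp.mpr
          have h1m : (1:ℝ) ≤ (m:ℝ) := by exact_mod_cast hm1
          nlinarith
        rw [hsum, ← ENNReal.ofReal_add (Real.exp_pos α).le (sub_nonneg.mpr hle)]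
        apply ENNReal.ofReal_le_ofReal; linarith
      refine le_trans hkey (add_le_add_right ?_ _)
      calc ∑ n ∈ Finset.range (m - 1), c n
          = ∑ n ∈ Finset.range (m - 1), c n * χ (n + 1) ω := by
            refine Finset.sum_congr rfl fun n hn => ?_
            rw [hχeq n (by have := Finset.mem_range.mp hn; omega), mul_one]
        _ ≤ ∑' n : ℕ, c n * χ (n + 1) ω := ENNReal.sum_le_tsum _
    · rw [if_neg hne]
      have hχall : ∀ n : ℕ, χ (n + 1) ω = 1 := by
        intro n
        apply Set.indicator_of_mem _ _
        intro k hk1 _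
        by_contra hcon
        exact hne ⟨k, hk1, not_lt.mp hcon⟩
      have hc0 : c 0 ≠ 0 := by
        rw [hcdef]
        simp only [ne_eq, ENNReal.ofReal_eq_zero, not_le]
        have : F 0 < F 1 := by
          rw [hFdef]; simp only []
          have : u ^ 1 < u ^ 2 := by nlinarith
          simpa using this
        linarith
      have hle : ∀ n : ℕ, c 0 ≤ c n * χ (n + 1) ω := by
        intro n
        rw [hχall n, mul_one, hcdef]
        apply ENNReal.ofReal_le_ofReal
        rw [hFdef]
        simp only []
        have e1 : u ^ (n + 1 + 1) - u ^ (n + 1) = u ^ n * (u ^ 2 - u ^ 1) := by ring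
        have e2 : (1:ℝ) ≤ u ^ n := one_le_pow₀ hu1.le
        have e3 : (0:ℝ) ≤ u ^ 2 - u ^ 1 := by nlinarith
        calc u ^ (0 + 1 + 1) - u ^ (0 + 1) = u ^ 2 - u ^ 1 := by norm_num
          _ = 1 * (u ^ 2 - u ^ 1) := (one_mul _).symm
          _ ≤ u ^ n * (u ^ 2 - u ^ 1) := mul_le_mul_of_nonneg_right e2 e3
          _ = u ^ (n + 1 + 1) - u ^ (n + 1) := e1.symm
      have htop : (∑' n : ℕ, c n * χ (n + 1) ω) = ⊤ := by
        apply top_le_iff.mp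
        calc (⊤ : ENNReal) = ∑' _ : ℕ, c 0 := (ENNReal.tsum_const_eq_top_of_ne_zero hc0).symm
          _ ≤ ∑' n : ℕ, c n * χ (n + 1) ω := ENNReal.tsum_le_tsum hle
      rw [htop]
      simp
  -- sum bound constants
  set D : ℝ := s⁻¹ * (u - 1) * (N / R) with hDdef
  have hD0 : 0 ≤ D := by
    have : (0:ℝ) ≤ u - 1 := by linarith
    rw [hDdef]; positivity
  have hterm : ∀ n : ℕ, c n * ENNReal.ofReal (δ ^ n * N / R) = ENNReal.ofReal (D * s ^ n) := by
    intro n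
    rw [hcdef, ← ENNReal.ofReal_mul (sub_nonneg.mpr (hFmono (Nat.le_succ n)))]
    congr 1
    have hu : u = s⁻¹ := hexp
    have hsn : (s⁻¹) ^ n * (s ^ 2) ^ n = s ^ n := by
      rw [← mul_pow]
      congr 1
      field_simp
    calc (F (n + 1) - F n) * (δ ^ n * N / R)
        = ((s⁻¹) ^ n * (s ^ 2) ^ n) * ((s⁻¹ ^ 2 - s⁻¹) * (N / R)) := by
          rw [hFdef]; simp only []; rw [hu, ← hs2]; ring
      _ = s ^ n * ((s⁻¹ ^ 2 - s⁻¹) * (N / R)) := by rw [hsn]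
      _ = D * s ^ n := by rw [hDdef, hu]; ring
  -- main calculation
  have hsummable : Summable (fun n : ℕ => D * s ^ n) :=
    (summable_geometric_of_lt_one hs0.le hs1).mul_left D
  have htsum : ∑' n : ℕ, ENNReal.ofReal (D * s ^ n) = ENNReal.ofReal (D * (1 - s)⁻¹) := by
    rw [← ENNReal.ofReal_tsum_of_nonneg (fun n => by positivity) hsummable,
      tsum_mul_left, tsum_geometric_of_lt_one hs0.le hs1]
  have hDsum : D * (1 - s)⁻¹ = N / (δ * R) := by
    rw [hDdef, hexp, ← hs2]
    have hsne : s ≠ 0 := hs0.ne'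
    have h1s : (1:ℝ) - s ≠ 0 := by linarith
    field_simp
  have hfinal : Real.exp α + N / (δ * R) ≤ C * (1 + V x) := by
    have hδR : 0 < δ * R := mul_pos hδ0 hR0
    have e1 : N / (δ * R) = γ / (δ * R) * V x + B / (δ * R) := by
      rw [hNdef]; field_simp
    have e2 : γ / (δ * R) ≤ C := by
      rw [hCdef]
      have : γ / (δ * R) ≤ (γ + B) / (δ * R) := by gcongr; linarith
      nlinarith [Real.exp_pos α]
    have e3 : B / (δ * R) ≤ (γ + B) / (δ * R) := by gcongr; linarith
    have e4 : γ / (δ * R) * V x ≤ C * V x := mul_le_mul_of_nonneg_right e2 (hV0 x)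
    rw [hCdef]
    nlinarith [hV0 x]
  calc ∫⁻ ω, (if {n : ℕ | 1 ≤ n ∧ V (ω n) ≤ R}.Nonempty
          then ENNReal.ofReal (Real.exp (α * (sInf {n : ℕ | 1 ≤ n ∧ V (ω n) ≤ R} : ℕ)))
          else ⊤) ∂(Pm x)
      ≤ ∫⁻ ω, (ENNReal.ofReal (Real.exp α) + ∑' n : ℕ, c n * χ (n + 1) ω) ∂(Pm x) :=
        lintegral_mono hpt
    _ = ENNReal.ofReal (Real.exp α) + ∫⁻ ω, ∑' n : ℕ, c n * χ (n + 1) ω ∂(Pm x) := by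
        rw [lintegral_add_left measurable_const, lintegral_const, measure_univ, mul_one]
    _ = ENNReal.ofReal (Real.exp α) + ∑' n : ℕ, ∫⁻ ω, c n * χ (n + 1) ω ∂(Pm x) := by
        rw [lintegral_tsum fun n => ((hχmeas (n + 1)).const_mul _).aemeasurable]
    _ = ENNReal.ofReal (Real.exp α) + ∑' n : ℕ, c n * ∫⁻ ω, χ (n + 1) ω ∂(Pm x) := by
        congr 1
        exact tsum_congr fun n => lintegral_const_mul' _ _ ENNReal.ofReal_ne_top
    _ ≤ ENNReal.ofReal (Real.exp α) + ∑' n : ℕ, ENNReal.ofReal (D * s ^ n) := by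
        refine add_le_add_right (ENNReal.tsum_le_tsum fun n => ?_) _
        rw [← hterm n]
        exact mul_le_mul_right (hP n) _
    _ = ENNReal.ofReal (Real.exp α + N / (δ * R)) := by
        rw [htsum, hDsum, ENNReal.ofReal_add (Real.exp_pos α).le (by positivity)]
    _ ≤ ENNReal.ofReal (C * (1 + V x)) := ENNReal.ofReal_le_ofReal hfinal
end

section
/- Let (E, ℰ) be a measurable space, κ a Markov kernel on E, V : E → [0, ∞) a measurable function, γ ∈ (0, 1) and B ≥ 0 such that ∫_E V(y) κ(x, dy) ≤ γ V(x) + B for all x ∈ E. Then every invariant probability measure μ of κ (i.e. μκ = μ) satisfies ∫_E V dμ ≤ B/(1 − γ); in particular ∫_E V dμ < ∞. -/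
open MeasureTheory ProbabilityTheory Filter

private lemma min_add_aux (a c d : ENNReal) : min a (c + d) ≤ min a c + d := by
  rcases le_total c a with h | h
  · rw [min_eq_right h]
    exact min_le_right _ _
  · rw [min_eq_left h]
    exact (min_le_left _ _).trans le_self_add

/-- under the Lyapunov drift condition `∫ V dκ(x,·) ≤ γ V(x) + B` with
`γ ∈ (0,1)`, `B ≥ 0`, every invariant probability measure `μ` of the Markov kernel `κ`
satisfies `∫ V dμ ≤ B/(1−γ)`; in particular `∫ V dμ < ∞`. -/
theorem invariant_measure_moment_bound
    {E : Type*} [MeasurableSpace E]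
    (κ : Kernel E E) [IsMarkovKernel κ]
    (V : E → ℝ) (hVmeas : Measurable V) (hVnn : ∀ x, 0 ≤ V x)
    (γ B : ℝ) (hγ0 : 0 < γ) (hγ1 : γ < 1) (hB : 0 ≤ B)
    (hdrift : ∀ x, ∫⁻ y, ENNReal.ofReal (V y) ∂(κ x) ≤ ENNReal.ofReal (γ * V x + B))
    (μ : Measure E) [IsProbabilityMeasure μ]
    (hinv : μ.bind (fun x => κ x) = μ) :
    ∫⁻ x, ENNReal.ofReal (V x) ∂μ ≤ ENNReal.ofReal (B / (1 - γ)) ∧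
      ∫⁻ x, ENNReal.ofReal (V x) ∂μ < ⊤ := by
  set W : E → ENNReal := fun x => ENNReal.ofReal (V x) with hWdef
  have hWmeas : Measurable W := hVmeas.ennreal_ofReal
  set g : ENNReal := ENNReal.ofReal γ with hgdef
  set b : ENNReal := ENNReal.ofReal B with hbdef
  have hg1 : g < 1 := by
    rw [hgdef]
    exact ENNReal.ofReal_lt_one.mpr hγ1
  have hdrift' : ∀ x, ∫⁻ y, W y ∂(κ x) ≤ g * W x + b := by
    intro x
    refine (hdrift x).trans_eq ?_
    rw [ENNReal.ofReal_add (mul_nonneg hγ0.le (hVnn x)) hB,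
      ENNReal.ofReal_mul hγ0.le]
  have hinvL : ∀ f : E → ENNReal, Measurable f →
      ∫⁻ x, f x ∂μ = ∫⁻ x, ∫⁻ y, f y ∂(κ x) ∂μ := by
    intro f hf
    conv_lhs => rw [← hinv]
    exact Measure.lintegral_bind κ.measurable.aemeasurable hf.aemeasurable
  -- key truncated bound
  have key : ∀ n : ℕ, ∫⁻ x, min (n : ENNReal) (W x) ∂μ ≤ ENNReal.ofReal (B / (1 - γ)) := by
    intro n
    have hmeask : ∀ k : ℕ, Measurable fun x => min (n : ENNReal) (g ^ k * W x) :=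
      fun k => measurable_const.min (hWmeas.const_mul _)
    -- geometric sum bound
    have hsum : ∀ k : ℕ, (∑ j ∈ Finset.range k, g ^ j) * b ≤ ENNReal.ofReal (B / (1 - γ)) := by
      intro k
      have h1γ : (0:ℝ) < 1 - γ := by linarith
      have hsreal : (∑ j ∈ Finset.range k, γ ^ j) ≤ 1 / (1 - γ) := by
        calc (∑ j ∈ Finset.range k, γ ^ j) = (γ ^ k - 1) / (γ - 1) :=
              geom_sum_eq (ne_of_lt hγ1) k
          _ = (1 - γ ^ k) / (1 - γ) := by
              rw [← neg_div_neg_eq]; ring_nf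
          _ ≤ 1 / (1 - γ) := by
              gcongr
              linarith [pow_nonneg hγ0.le k]
      calc (∑ j ∈ Finset.range k, g ^ j) * b
          = ENNReal.ofReal ((∑ j ∈ Finset.range k, γ ^ j) * B) := by
            rw [ENNReal.ofReal_mul (Finset.sum_nonneg fun j _ => pow_nonneg hγ0.le j)]
            congr 1
            rw [ENNReal.ofReal_sum_of_nonneg (fun j _ => pow_nonneg hγ0.le j)]
            exact Finset.sum_congr rfl fun j _ => (ENNReal.ofReal_pow hγ0.le j).symm
        _ ≤ ENNReal.ofReal (B / (1 - γ)) := by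
            apply ENNReal.ofReal_le_ofReal
            rw [div_eq_mul_inv, ← one_div]
            calc (∑ j ∈ Finset.range k, γ ^ j) * B ≤ (1 / (1 - γ)) * B :=
                  mul_le_mul_of_nonneg_right hsreal hB
              _ = B * (1 / (1 - γ)) := mul_comm _ _
    -- induction on k
    have ind : ∀ k : ℕ, ∫⁻ x, min (n : ENNReal) (W x) ∂μ ≤
        ∫⁻ x, min (n : ENNReal) (g ^ k * W x) ∂μ + (∑ j ∈ Finset.range k, g ^ j) * b := by
      intro k
      induction k with
      | zero => simp
      | succ k ih =>
        refine ih.trans ?_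
        have hstep : ∫⁻ x, min (n : ENNReal) (g ^ k * W x) ∂μ ≤
            ∫⁻ x, min (n : ENNReal) (g ^ (k + 1) * W x) ∂μ + g ^ k * b := by
          rw [hinvL _ (hmeask k)]
          calc ∫⁻ x, ∫⁻ y, min (n : ENNReal) (g ^ k * W y) ∂(κ x) ∂μ
              ≤ ∫⁻ x, (min (n : ENNReal) (g ^ (k + 1) * W x) + g ^ k * b) ∂μ := by
                apply lintegral_mono
                intro x
                have hA : ∫⁻ y, min (n : ENNReal) (g ^ k * W y) ∂(κ x) ≤
                    min (n : ENNReal) (g ^ k * (g * W x + b)) := by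
                  apply le_min
                  · calc ∫⁻ y, min (n : ENNReal) (g ^ k * W y) ∂(κ x)
                        ≤ ∫⁻ _, (n : ENNReal) ∂(κ x) :=
                          lintegral_mono fun y => min_le_left _ _
                      _ = n := by simp
                  · calc ∫⁻ y, min (n : ENNReal) (g ^ k * W y) ∂(κ x)
                        ≤ ∫⁻ y, g ^ k * W y ∂(κ x) :=
                          lintegral_mono fun y => min_le_right _ _
                      _ = g ^ k * ∫⁻ y, W y ∂(κ x) := lintegral_const_mul _ hWmeas
                      _ ≤ g ^ k * (g * W x + b) := mul_le_mul_right (hdrift' x) _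
                refine hA.trans ?_
                have heq : g ^ k * (g * W x + b) = g ^ (k + 1) * W x + g ^ k * b := by
                  ring
                rw [heq]
                exact min_add_aux _ _ _
            _ = ∫⁻ x, min (n : ENNReal) (g ^ (k + 1) * W x) ∂μ + g ^ k * b := by
                rw [lintegral_add_right _ measurable_const, lintegral_const,
                  measure_univ, mul_one]
        calc ∫⁻ x, min (n : ENNReal) (g ^ k * W x) ∂μ + (∑ j ∈ Finset.range k, g ^ j) * b
            ≤ (∫⁻ x, min (n : ENNReal) (g ^ (k + 1) * W x) ∂μ + g ^ k * b) +
              (∑ j ∈ Finset.range k, g ^ j) * b := add_le_add_left hstep _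
          _ = ∫⁻ x, min (n : ENNReal) (g ^ (k + 1) * W x) ∂μ +
              (∑ j ∈ Finset.range (k + 1), g ^ j) * b := by
                rw [Finset.sum_range_succ, add_mul, add_assoc, add_comm (g ^ k * b)]
    -- the truncated integrals tend to 0
    have hlim : Tendsto (fun k => ∫⁻ x, min (n : ENNReal) (g ^ k * W x) ∂μ) atTop (nhds 0) := by
      have hμn : ∫⁻ _, (n : ENNReal) ∂μ ≠ ⊤ := by simp
      have := tendsto_lintegral_of_dominated_convergence (μ := μ)
        (F := fun k x => min (n : ENNReal) (g ^ k * W x)) (f := fun _ => 0)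
        (fun _ => (n : ENNReal)) hmeask
        (fun k => Filter.Eventually.of_forall fun x => min_le_left _ _) hμn ?_
      · simpa using this
      · apply Filter.Eventually.of_forall
        intro x
        have hWx : W x ≠ ⊤ := ENNReal.ofReal_ne_top
        have h0 : Tendsto (fun k => g ^ k * W x) atTop (nhds 0) := by
          have := ENNReal.Tendsto.mul_const
            (ENNReal.tendsto_pow_atTop_nhds_zero_of_lt_one hg1) (b := W x) (Or.inr hWx)
          simpa using this
        have : Tendsto (fun k => min (n : ENNReal) (g ^ k * W x)) atTop (nhds 0) := by
          apply tendsto_of_tendsto_of_tendsto_of_le_of_le tendsto_const_nhds h0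
          · intro k; exact zero_le
          · intro k; exact min_le_right _ _
        exact this
    -- conclude
    have hAk : ∀ k, ∫⁻ x, min (n : ENNReal) (W x) ∂μ ≤
        ∫⁻ x, min (n : ENNReal) (g ^ k * W x) ∂μ + ENNReal.ofReal (B / (1 - γ)) :=
      fun k => (ind k).trans (add_le_add_right (hsum k) _)
    have htend : Tendsto (fun k => ∫⁻ x, min (n : ENNReal) (g ^ k * W x) ∂μ +
        ENNReal.ofReal (B / (1 - γ))) atTop (nhds (0 + ENNReal.ofReal (B / (1 - γ)))) :=
      hlim.add tendsto_const_nhds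
    have := ge_of_tendsto' htend hAk
    simpa using this
  -- now pass to the limit n → ∞ by monotone convergence
  have hmono : Monotone fun (n : ℕ) (x : E) => min (n : ENNReal) (W x) := by
    intro m n hmn x
    exact min_le_min (by exact_mod_cast Nat.cast_le.mpr hmn) le_rfl
  have hsup : ∀ x, ⨆ n : ℕ, min (n : ENNReal) (W x) = W x := by
    intro x
    obtain ⟨n, hn⟩ := ENNReal.exists_nat_gt (show W x ≠ ⊤ from ENNReal.ofReal_ne_top)
    apply le_antisymm (iSup_le fun n => min_le_right _ _)
    exact le_iSup_of_le n (le_of_eq (min_eq_right hn.le).symm)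
  have hmain : ∫⁻ x, W x ∂μ ≤ ENNReal.ofReal (B / (1 - γ)) := by
    have heq : ∫⁻ x, W x ∂μ = ⨆ n : ℕ, ∫⁻ x, min (n : ENNReal) (W x) ∂μ := by
      rw [← lintegral_iSup (fun n => measurable_const.min hWmeas) hmono]
      exact lintegral_congr fun x => (hsup x).symm
    rw [heq]
    exact iSup_le key
  exact ⟨hmain, hmain.trans_lt ENNReal.ofReal_lt_top⟩
end
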